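/- Let κ be an infinite regular cardinal and S a semigroup of cardinality κ that is κ-weakly cancellative. Then there exists a partition {X_α : α < κ} of S such that |X_α| < κ for all α, and for every A ⊆ κ of cardinality κ, the union ⋃_{α∈A} X_α is S-thick. -/

import Mathlib

open Set Filter

def Thick {S : Type*} [Semigroup S] (A : Set S) : Prop :=
  ∀ F : Finset S, ∃ t : S, ∀ f ∈ F, f * t ∈ A

section Aux

open Cardinal

variable {S : Type u} [Semigroup S] [Nonempty S]

open Classical in
/-- Choose, if possible, a `t` such that all translates `f * t` (for `f ∈ F`) avoid `Y`. -/
noncomputable def pickT (F : Finset S) (Y : Set S) : S :=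
  if h : ∃ t : S, ∀ f ∈ F, f * t ∉ Y then h.choose else Classical.arbitrary S

lemma pickT_spec {F : Finset S} {Y : Set S} (h : ∃ t : S, ∀ f ∈ F, f * t ∉ Y) :
    ∀ f ∈ F, f * pickT F Y ∉ Y := by
  rw [pickT, dif_pos h]; exact h.choose_spec

variable (r : S → S → Prop) [IsWellOrder S r]

/-- The piece of the partition indexed by `a : S`, defined by transfinite recursion. -/
noncomputable def piece : S → Set S :=
  (IsWellFounded.wf (r := r)).fix fun a prev =>
    ({a} ∪ ⋃ F ∈ {F : Finset S | ∀ f ∈ F, r f a},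
        (fun f => f * pickT F (⋃ b, ⋃ h : r b a, prev b h)) '' ↑F) \
      (⋃ b, ⋃ h : r b a, prev b h)

/-- The union of all earlier pieces. -/
noncomputable def prevU (a : S) : Set S := ⋃ b, ⋃ _ : r b a, piece r b

lemma piece_eq (a : S) : piece r a =
    ({a} ∪ ⋃ F ∈ {F : Finset S | ∀ f ∈ F, r f a},
        (fun f => f * pickT F (prevU r a)) '' ↑F) \ prevU r a := by
  conv_lhs => rw [piece, WellFounded.fix_eq]
  rfl

end Aux

theorem exists_thick_partition {S : Type u} [Semigroup S] (κ : Cardinal.{u})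
    (hreg : κ.IsRegular) (hS : Cardinal.mk S = κ)
    (hwc : ∀ s t : S, Cardinal.mk {x | s * x = t} < κ ∧ Cardinal.mk {x | x * s = t} < κ) :
    ∃ (ι : Type u) (X : ι → Set S), Cardinal.mk ι = κ ∧
      Pairwise (Function.onFun Disjoint X) ∧
      (⋃ α, X α) = univ ∧
      (∀ α, Cardinal.mk (X α) < κ) ∧
      (∀ A : Set ι, Cardinal.mk A = κ → Thick (⋃ α ∈ A, X α)) := by
  classical
  have hne : Nonempty S := by
    rw [← Cardinal.mk_ne_zero_iff, hS]
    exact (hreg.aleph0_le.trans_lt' Cardinal.aleph0_pos).ne'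
  obtain ⟨r, wo, hord⟩ := Cardinal.ord_eq S
  haveI := wo
  -- initial segments are small
  have hseg : ∀ a : S, Cardinal.mk {b | r b a} < κ := by
    intro a
    have h1 := Cardinal.card_typein_lt (r := r) a hord
    rw [Ordinal.card_typein, hS] at h1
    exact h1
  -- each piece is small
  have hsize : ∀ a : S, Cardinal.mk (piece r a) < κ := by
    intro a
    induction a using (IsWellFounded.wf (r := r)).induction with
    | _ a ih =>
      have hprev : Cardinal.mk (prevU r a) < κ := by
        have : prevU r a = ⋃ b ∈ {b | r b a}, piece r b := rfl
        rw [this, Cardinal.card_biUnion_lt_iff_forall_of_isRegular hreg (hseg a)]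
        exact fun b hb => ih b hb
      have hFs : Cardinal.mk {F : Finset S | ∀ f ∈ F, r f a} < κ := by
        have hinj : Function.Injective
            (fun F : {F : Finset S | ∀ f ∈ F, r f a} =>
              (F : Finset S).subtype (fun b => r b a)) := by
          rintro ⟨F, hF⟩ ⟨G, hG⟩ h
          simp only [Subtype.mk.injEq] at h ⊢
          ext x
          constructor
          · intro hx
            have hx' : (⟨x, hF x hx⟩ : {b // r b a}) ∈ F.subtype _ := by
              simp [Finset.mem_subtype, hx]
            rw [h] at hx'
            simpa [Finset.mem_subtype] using hx'
          · intro hx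
            have hx' : (⟨x, hG x hx⟩ : {b // r b a}) ∈ G.subtype _ := by
              simp [Finset.mem_subtype, hx]
            rw [← h] at hx'
            simpa [Finset.mem_subtype] using hx'
        refine (Cardinal.mk_le_of_injective hinj).trans_lt ?_
        cases finite_or_infinite {b // r b a} with
        | inl h => haveI := Fintype.ofFinite {b // r b a}; exact (Cardinal.lt_aleph0_of_finite _).trans_le hreg.aleph0_le
        | inr h => rw [Cardinal.mk_finset_of_infinite]; exact hseg a
      have hU : Cardinal.mk (⋃ F ∈ {F : Finset S | ∀ f ∈ F, r f a},
          (fun f => f * pickT F (prevU r a)) '' ↑F) < κ := by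
        rw [Cardinal.card_biUnion_lt_iff_forall_of_isRegular hreg hFs]
        intro F _
        calc Cardinal.mk ((fun f => f * pickT F (prevU r a)) '' (↑F : Set S))
            ≤ Cardinal.mk (↑F : Set S) := Cardinal.mk_image_le
          _ < Cardinal.aleph0 := Cardinal.lt_aleph0_of_finite _
          _ ≤ κ := hreg.aleph0_le
      rw [piece_eq]
      refine ((Cardinal.mk_le_mk_of_subset diff_subset).trans
        (Cardinal.mk_union_le _ _)).trans_lt ?_
      refine Cardinal.add_lt_of_lt hreg.aleph0_le ?_ hU
      rw [Cardinal.mk_singleton]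
      exact Cardinal.one_lt_aleph0.trans_le hreg.aleph0_le
  -- unions of earlier pieces are small
  have hprevU : ∀ a : S, Cardinal.mk (prevU r a) < κ := by
    intro a
    have h0 : prevU r a = ⋃ b ∈ {b | r b a}, piece r b := rfl
    rw [h0, Cardinal.card_biUnion_lt_iff_forall_of_isRegular hreg (hseg a)]
    exact fun b _ => hsize b
  -- existence of good translators
  have hex : ∀ (F : Finset S) (a : S), ∃ t : S, ∀ f ∈ F, f * t ∉ prevU r a := by
    intro F a
    by_contra hcon
    push_neg at hcon
    have hsub : (univ : Set S) ⊆ ⋃ f ∈ (↑F : Set S), ⋃ y ∈ prevU r a, {t | f * t = y} := by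
      intro t _
      obtain ⟨f, hf, hy⟩ := hcon t
      exact mem_biUnion (by exact_mod_cast hf) (mem_biUnion hy rfl)
    have hbig : Cardinal.mk (⋃ f ∈ (↑F : Set S), ⋃ y ∈ prevU r a, {t | f * t = y}) < κ := by
      rw [Cardinal.card_biUnion_lt_iff_forall_of_isRegular hreg
        ((Cardinal.lt_aleph0_of_finite _).trans_le hreg.aleph0_le)]
      intro f _
      rw [Cardinal.card_biUnion_lt_iff_forall_of_isRegular hreg (hprevU a)]
      intro y _
      exact (hwc f y).1
    have hlt := (Cardinal.mk_le_mk_of_subset hsub).trans_lt hbig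
    rw [Cardinal.mk_univ, hS] at hlt
    exact lt_irrefl _ hlt
  -- the key membership property
  have hmem : ∀ (a : S) (F : Finset S), (∀ f ∈ F, r f a) →
      ∀ f ∈ F, f * pickT F (prevU r a) ∈ piece r a := by
    intro a F hF f hf
    rw [piece_eq]
    refine ⟨Or.inr ?_, pickT_spec (hex F a) f hf⟩
    exact mem_biUnion (show F ∈ {F : Finset S | ∀ f ∈ F, r f a} from hF)
      (mem_image_of_mem _ hf)
  -- disjointness
  have hsub_prev : ∀ {b a : S}, r b a → piece r b ⊆ prevU r a := by
    intro b a h x hx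
    exact mem_iUnion.2 ⟨b, mem_iUnion.2 ⟨h, hx⟩⟩
  have hdisj_prev : ∀ a : S, Disjoint (piece r a) (prevU r a) := by
    intro a
    rw [piece_eq]
    exact disjoint_sdiff_left
  have hpair : Pairwise (Function.onFun Disjoint (piece r)) := by
    intro a b hab
    rcases trichotomous_of r a b with h | h | h
    · exact ((hdisj_prev b).mono_right (hsub_prev h)).symm
    · exact absurd h hab
    · exact (hdisj_prev a).mono_right (hsub_prev h)
  -- covering
  have hcover : (⋃ a, piece r a) = univ := by
    refine eq_univ_of_forall fun x => ?_
    by_cases hx : x ∈ prevU r x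
    · obtain ⟨b, hb⟩ := mem_iUnion.1 hx
      obtain ⟨h, hxb⟩ := mem_iUnion.1 hb
      exact mem_iUnion.2 ⟨b, hxb⟩
    · refine mem_iUnion.2 ⟨x, ?_⟩
      rw [piece_eq]
      exact ⟨Or.inl rfl, hx⟩
  refine ⟨S, piece r, hS, hpair, hcover, hsize, ?_⟩
  intro A hA F
  have hbad : Cardinal.mk (⋃ f ∈ (↑F : Set S), {a | ¬ r f a}) < κ := by
    rw [Cardinal.card_biUnion_lt_iff_forall_of_isRegular hreg
      ((Cardinal.lt_aleph0_of_finite _).trans_le hreg.aleph0_le)]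
    intro f _
    have hsub2 : {a | ¬ r f a} ⊆ insert f {a | r a f} := by
      intro a ha
      rcases trichotomous_of r a f with h | h | h
      · exact Or.inr h
      · exact Or.inl h
      · exact absurd h ha
    refine ((Cardinal.mk_le_mk_of_subset hsub2).trans (Cardinal.mk_insert_le ..)).trans_lt ?_
    exact Cardinal.add_lt_of_lt hreg.aleph0_le (hseg f)
      (Cardinal.one_lt_aleph0.trans_le hreg.aleph0_le)
  have hns : ¬ (A ⊆ ⋃ f ∈ (↑F : Set S), {a | ¬ r f a}) := by
    intro hAs
    have hlt := (Cardinal.mk_le_mk_of_subset hAs).trans_lt hbad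
    rw [hA] at hlt
    exact lt_irrefl _ hlt
  obtain ⟨a, haA, hna⟩ := not_subset.1 hns
  have hFa : ∀ f ∈ F, r f a := by
    intro f hf
    by_contra h
    exact hna (mem_biUnion (by exact_mod_cast hf) h)
  exact ⟨pickT F (prevU r a), fun f hf => mem_biUnion haA (hmem a F hFa f hf)⟩
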